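/- Let ℓ ≥ 4 and m with 2m ≤ ℓ. In U(sl_ℓ(ℂ)), let Δ_m = det((E_{i, ℓ+1−j})_{1≤i,j≤m}) (well-defined since the entries commute). Then for every standard raising generator E_{k,k+1} (1 ≤ k ≤ ℓ−1), the adjoint action satisfies [E_{k,k+1}, Δ_m] = 0. -/

import Mathlib

open UniversalEnvelopingAlgebra LieAlgebra.SpecialLinear

/-- Leibniz determinant for a (possibly noncommutative) ring, with factors taken
in the row order `0, 1, …, m-1`. -/
noncomputable def ncdet {R : Type*} [Ring R] {m : ℕ} (M : Fin m → Fin m → R) : R :=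
  ∑ σ : Equiv.Perm (Fin m),
    ((Equiv.Perm.sign σ : ℤ) • ((List.finRange m).map (fun i => M i (σ i))).prod)

section ListLemmas
variable {R : Type*} [Ring R] {α : Type*} [DecidableEq α]

/-- Leibniz: commutator with a list product where `x` commutes with all factors
except the one at `a0`. -/
lemma comm_prod_single : ∀ (L : List α), L.Nodup → ∀ (f g : α → R) (x : R) (a0 : α), a0 ∈ L →
    (∀ a ∈ L, a ≠ a0 → x * f a = f a * x) →
    (∀ a ∈ L, a ≠ a0 → g a = f a) →
    g a0 = x * f a0 - f a0 * x →
    x * (L.map f).prod - (L.map f).prod * x = (L.map g).prod := by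
  intro L
  induction L with
  | nil => intro _ _ _ _ _ h; exact absurd h List.not_mem_nil
  | cons a L ih =>
    intro hnd f g x a0 hmem hcomm hg hga0
    rw [List.nodup_cons] at hnd
    by_cases ha : a = a0
    · subst ha
      have hxP : Commute x ((L.map f).prod) := by
        apply Commute.list_prod_right
        intro y hy
        rw [List.mem_map] at hy
        obtain ⟨b, hb, rfl⟩ := hy
        exact hcomm b (List.mem_cons_of_mem _ hb) (fun h => hnd.1 (h ▸ hb))
      have hmapeq : L.map g = L.map f := by
        apply List.map_congr_left
        intro b hb
        exact hg b (List.mem_cons_of_mem _ hb) (fun h => hnd.1 (h ▸ hb))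
      simp only [List.map_cons, List.prod_cons, hmapeq, hga0]
      rw [← mul_assoc, mul_assoc (f a), ← hxP.eq, ← mul_assoc, ← sub_mul]
    · have hmem' : a0 ∈ L := by
        rcases List.mem_cons.1 hmem with h | h
        · exact absurd h.symm ha
        · exact h
      have hxa : x * f a = f a * x := hcomm a List.mem_cons_self ha
      have := ih hnd.2 f g x a0 hmem'
        (fun b hb hb0 => hcomm b (List.mem_cons_of_mem _ hb) hb0)
        (fun b hb hb0 => hg b (List.mem_cons_of_mem _ hb) hb0) hga0
      simp only [List.map_cons, List.prod_cons]
      rw [hg a List.mem_cons_self ha, ← mul_assoc, hxa, mul_assoc, mul_assoc,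
        ← mul_sub, this]

lemma prod_replace_neg : ∀ (L : List α), L.Nodup → ∀ (f g : α → R) (a0 : α), a0 ∈ L →
    (∀ a ∈ L, a ≠ a0 → f a = g a) → f a0 = - g a0 →
    (L.map f).prod = -((L.map g).prod) := by
  intro L
  induction L with
  | nil => intro _ _ _ _ h; exact absurd h List.not_mem_nil
  | cons a L ih =>
    intro hnd f g a0 hmem hfg h0
    rw [List.nodup_cons] at hnd
    by_cases ha : a = a0
    · subst ha
      have hmapeq : L.map f = L.map g := by
        apply List.map_congr_left
        intro b hb
        exact hfg b (List.mem_cons_of_mem _ hb) (fun h => hnd.1 (h ▸ hb))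
      simp only [List.map_cons, List.prod_cons, hmapeq, h0, neg_mul]
    · have hmem' : a0 ∈ L := by
        rcases List.mem_cons.1 hmem with h | h
        · exact absurd h.symm ha
        · exact h
      have := ih hnd.2 f g a0 hmem'
        (fun b hb hb0 => hfg b (List.mem_cons_of_mem _ hb) hb0) h0
      simp only [List.map_cons, List.prod_cons, this, hfg a List.mem_cons_self ha,
        mul_neg]

end ListLemmas


section NcdetLemmas
variable {R : Type*} [Ring R] {m : ℕ}

lemma ncdet_col_eq_zero (M : Fin m → Fin m → R) (j0 j1 : Fin m) (hne : j0 ≠ j1)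
    (h : ∀ i, M i j0 = M i j1) : ncdet M = 0 := by
  unfold ncdet
  apply Finset.sum_ninvolution (fun σ => Equiv.swap j0 j1 * σ)
  · intro σ
    have hprod : ((List.finRange m).map (fun i => M i ((Equiv.swap j0 j1 * σ) i))).prod
        = ((List.finRange m).map (fun i => M i (σ i))).prod := by
      congr 1
      apply List.map_congr_left
      intro i _
      show M i (Equiv.swap j0 j1 (σ i)) = M i (σ i)
      rcases eq_or_ne (σ i) j0 with h0 | h0
      · rw [h0, Equiv.swap_apply_left, ← h]
      rcases eq_or_ne (σ i) j1 with h1 | h1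
      · rw [h1, Equiv.swap_apply_right, h]
      · rw [Equiv.swap_apply_of_ne_of_ne h0 h1]
    rw [hprod, Equiv.Perm.sign_mul, Equiv.Perm.sign_swap hne]
    push_cast
    rw [neg_one_mul, neg_smul]
    exact add_neg_cancel _
  · intro σ _ heq
    have h2 : (Equiv.swap j0 j1 * σ) (σ⁻¹ j0) = σ (σ⁻¹ j0) := by rw [heq]
    rw [Equiv.Perm.mul_apply, show σ (σ⁻¹ j0) = j0 from σ.apply_symm_apply j0, Equiv.swap_apply_left] at h2
    exact hne h2.symm
  · intro _; exact Finset.mem_univ _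
  · intro σ; rw [← mul_assoc, Equiv.swap_mul_self, one_mul]

private lemma multiset_ncp_congr {α : Type*} [Monoid α] {m1 m2 : Multiset α} (h : m1 = m2)
    (c1 : {x | x ∈ m1}.Pairwise Commute) :
    Multiset.noncommProd m1 c1 = Multiset.noncommProd m2 (h ▸ c1) := by subst h; rfl

lemma list_prod_eq_noncommProd (f : Fin m → R)
    (hc : ∀ i j, Commute (f i) (f j)) :
    ((List.finRange m).map f).prod
      = Finset.univ.noncommProd f (fun a _ b _ _ => hc a b) := by
  unfold Finset.noncommProd
  have huniv : (Finset.univ : Finset (Fin m)).1 = (List.finRange m : Multiset (Fin m)) := by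
    rw [Fin.univ_def]
  have : (Finset.univ : Finset (Fin m)).1.map f
      = ((List.finRange m).map f : Multiset R) := by
    rw [huniv]; simp
  rw [multiset_ncp_congr this, Multiset.noncommProd_coe]

lemma noncommProd_comp_perm (e : Equiv.Perm (Fin m)) (f : Fin m → R) (c1 c2) :
    Finset.univ.noncommProd f c1 = Finset.univ.noncommProd (fun i => f (e i)) c2 := by
  unfold Finset.noncommProd
  have h : (Finset.univ : Finset (Fin m)).1.map f
      = (Finset.univ : Finset (Fin m)).1.map (fun i => f (e i)) := by
    conv_lhs => rw [← Finset.map_univ_equiv e]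
    rw [Finset.map_val, Multiset.map_map]
    rfl
  rw [multiset_ncp_congr h]

lemma ncdet_row_eq_zero (M : Fin m → Fin m → R) (i0 i1 : Fin m) (hne : i0 ≠ i1)
    (hrows : ∀ j, M i0 j = M i1 j)
    (hc : ∀ i j i' j', Commute (M i j) (M i' j')) : ncdet M = 0 := by
  unfold ncdet
  have hrw : ∀ σ : Equiv.Perm (Fin m),
      ((List.finRange m).map (fun i => M i (σ i))).prod
        = Finset.univ.noncommProd (fun i => M i (σ i)) (fun a _ b _ _ => hc _ _ _ _) :=
    fun σ => list_prod_eq_noncommProd _ _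
  simp only [hrw]
  apply Finset.sum_ninvolution (fun σ => σ * Equiv.swap i0 i1)
  · intro σ
    have hprod : Finset.univ.noncommProd (fun i => M i ((σ * Equiv.swap i0 i1) i))
          (fun a _ b _ _ => hc _ _ _ _)
        = Finset.univ.noncommProd (fun i => M i (σ i)) (fun a _ b _ _ => hc _ _ _ _) := by
      rw [noncommProd_comp_perm (Equiv.swap i0 i1) (fun i => M i (σ i))
        (fun a _ b _ _ => hc _ _ _ _) (fun a _ b _ _ => hc _ _ _ _)]
      apply Finset.noncommProd_congr rfl
      intro i _
      show M i (σ (Equiv.swap i0 i1 i)) = M (Equiv.swap i0 i1 i) (σ (Equiv.swap i0 i1 i))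
      rcases eq_or_ne i i0 with h0 | h0
      · rw [h0, Equiv.swap_apply_left, hrows]
      rcases eq_or_ne i i1 with h1 | h1
      · rw [h1, Equiv.swap_apply_right, ← hrows]
      · rw [Equiv.swap_apply_of_ne_of_ne h0 h1]
    rw [hprod, Equiv.Perm.sign_mul, Equiv.Perm.sign_swap hne]
    push_cast
    rw [mul_neg_one, neg_smul]
    exact add_neg_cancel _
  · intro σ _ heq
    have h2 : (σ * Equiv.swap i0 i1) i0 = σ i0 := by rw [heq]
    rw [Equiv.Perm.mul_apply, Equiv.swap_apply_left] at h2
    exact hne (σ.injective h2).symm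
  · intro _; exact Finset.mem_univ _
  · intro σ; rw [mul_assoc, Equiv.swap_mul_self, mul_one]

end NcdetLemmas

open UniversalEnvelopingAlgebra LieAlgebra.SpecialLinear

section EbLemmas
attribute [local instance 100] LieRing.ofAssociativeRing
variable {n : Type*} [Fintype n] [DecidableEq n]

lemma eb_congr {a b a' b' : n} (h : a ≠ b) (ha : a = a') (hb : b = b') :
    single a b h (1 : ℂ) = single a' b' (ha ▸ hb ▸ h) (1 : ℂ) := by subst ha; subst hb; rfl

lemma eb_bracket_zero {a b c d : n} (h1 : a ≠ b) (h2 : c ≠ d) (hbc : b ≠ c) (hda : d ≠ a) :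
    ι ℂ (single a b h1 (1 : ℂ)) * ι ℂ (single c d h2 (1 : ℂ)) = ι ℂ (single c d h2 (1 : ℂ)) * ι ℂ (single a b h1 (1 : ℂ)) := by
  have hz : ⁅single a b h1 (1 : ℂ), single c d h2 (1 : ℂ)⁆ = (0 : sl n ℂ) := by
    apply Subtype.ext
    rw [sl_bracket]
    simp only [val_single]
    rw [Matrix.single_mul_single_of_ne (h := hbc), Matrix.single_mul_single_of_ne (h := hda)]
    simp
  have := (ι ℂ (L := sl n ℂ)).map_lie
    (single a b h1 (1 : ℂ)) (single c d h2 (1 : ℂ))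
  rw [hz, Ring.lie_def, map_zero] at this
  exact sub_eq_zero.mp this.symm

lemma eb_bracket_mid {a b d : n} (h1 : a ≠ b) (h2 : b ≠ d) (hda : a ≠ d) :
    ι ℂ (single a b h1 (1 : ℂ)) * ι ℂ (single b d h2 (1 : ℂ)) - ι ℂ (single b d h2 (1 : ℂ)) * ι ℂ (single a b h1 (1 : ℂ))
      = ι ℂ (single a d hda (1 : ℂ)) := by
  have hz : ⁅single a b h1 (1 : ℂ), single b d h2 (1 : ℂ)⁆ = single a d hda (1 : ℂ) := by
    apply Subtype.ext
    rw [sl_bracket]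
    simp only [val_single]
    rw [Matrix.single_mul_single_same, Matrix.single_mul_single_of_ne (h := hda.symm)]
    simp
  have := (ι ℂ (L := sl n ℂ)).map_lie
    (single a b h1 (1 : ℂ)) (single b d h2 (1 : ℂ))
  rw [hz, Ring.lie_def] at this
  exact this.symm

end EbLemmas

section Main
set_option maxHeartbeats 1000000

lemma comm_ncdet_sum {R : Type*} [Ring R] {m : ℕ} (x : R) (M : Fin m → Fin m → R) :
    x * ncdet M - ncdet M * x
      = ∑ σ : Equiv.Perm (Fin m), ((Equiv.Perm.sign σ : ℤ) •
          (x * ((List.finRange m).map (fun i => M i (σ i))).prod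
            - ((List.finRange m).map (fun i => M i (σ i))).prod * x)) := by
  unfold ncdet
  rw [Finset.mul_sum, Finset.sum_mul, ← Finset.sum_sub_distrib]
  apply Finset.sum_congr rfl
  intro σ _
  rw [mul_smul_comm, smul_mul_assoc, ← smul_sub]

lemma main_aux {ℓ m : ℕ} (hℓ : 4 ≤ ℓ) (hm : 2 * m ≤ ℓ) (k : ℕ) (hk : k + 1 < ℓ)
    (hne : ((⟨k + 1, hk⟩ : Fin ℓ)) ≠ ⟨k, by omega⟩) :
    ι ℂ (single (⟨k, by omega⟩ : Fin ℓ) (⟨k + 1, hk⟩ : Fin ℓ) (Ne.symm hne) (1 : ℂ)) *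
        ncdet (fun i j : Fin m =>
          ι ℂ (single (⟨i, by omega⟩ : Fin ℓ) (⟨ℓ - 1 - j, by omega⟩ : Fin ℓ) (by apply Fin.ne_of_val_ne; simp only [Fin.val_mk]; have := i.isLt; have := j.isLt; omega) (1 : ℂ))) -
      ncdet (fun i j : Fin m =>
          ι ℂ (single (⟨i, by omega⟩ : Fin ℓ) (⟨ℓ - 1 - j, by omega⟩ : Fin ℓ) (by apply Fin.ne_of_val_ne; simp only [Fin.val_mk]; have := i.isLt; have := j.isLt; omega) (1 : ℂ))) *
        ι ℂ (single (⟨k, by omega⟩ : Fin ℓ) (⟨k + 1, hk⟩ : Fin ℓ) (Ne.symm hne) (1 : ℂ)) = 0 := by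
  set x : UniversalEnvelopingAlgebra ℂ (sl (Fin ℓ) ℂ) := ι ℂ (single (⟨k, by omega⟩ : Fin ℓ) (⟨k + 1, hk⟩ : Fin ℓ) (Ne.symm hne) (1 : ℂ)) with hx
  set M : Fin m → Fin m → UniversalEnvelopingAlgebra ℂ (sl (Fin ℓ) ℂ) := fun i j =>
    ι ℂ (single (⟨i, by omega⟩ : Fin ℓ) (⟨ℓ - 1 - j, by omega⟩ : Fin ℓ) (by apply Fin.ne_of_val_ne; simp only [Fin.val_mk]; have := i.isLt; have := j.isLt; omega) (1 : ℂ)) with hMdef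
  show x * ncdet M - ncdet M * x = 0
  -- entries pairwise commute
  have hcE : ∀ (i j i' j' : Fin m), M i j * M i' j' = M i' j' * M i j := by
    intro i j i' j'
    apply eb_bracket_zero
    · apply Fin.ne_of_val_ne; simp only [Fin.val_mk]
      have := j.isLt; have := i'.isLt; omega
    · apply Fin.ne_of_val_ne; simp only [Fin.val_mk]
      have := j'.isLt; have := i.isLt; omega
  rcases Nat.lt_or_ge (k + 1) m with hA | hA'
  · -- Case A : k + 1 < m, bracket replaces row k+1 by row k
    have hkm : k < m := by omega
    set i0 : Fin m := ⟨k, hkm⟩ with hi0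
    set i1 : Fin m := ⟨k + 1, hA⟩ with hi1
    set M'' : Fin m → Fin m → UniversalEnvelopingAlgebra ℂ (sl (Fin ℓ) ℂ) := fun i j => if i = i1 then M i0 j else M i j with hM''
    have step1 : x * ncdet M - ncdet M * x = ncdet M'' := by
      rw [comm_ncdet_sum]
      unfold ncdet
      apply Finset.sum_congr rfl
      intro σ _
      congr 1
      apply comm_prod_single (List.finRange m) (List.nodup_finRange m) _ _ x i1
        (List.mem_finRange i1)
      · intro a _ ha
        apply eb_bracket_zero
        · apply Fin.ne_of_val_ne; simp only [Fin.val_mk]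
          intro hcon
          exact ha (Fin.ext hcon.symm)
        · apply Fin.ne_of_val_ne; simp only [Fin.val_mk]
          have := (σ a).isLt; omega
      · intro a _ ha
        simp only [hM'', if_neg ha]
      · simp only [hM'', if_pos rfl]
        exact (eb_bracket_mid (n := Fin ℓ)
          (a := ⟨k, by omega⟩) (b := ⟨k + 1, hk⟩) (d := ⟨ℓ - 1 - (σ i1 : ℕ), by omega⟩)
          (Ne.symm hne)
          (by apply Fin.ne_of_val_ne; simp only [Fin.val_mk]; have := (σ i1).isLt; omega)
          (by apply Fin.ne_of_val_ne; simp only [Fin.val_mk]; have := (σ i1).isLt; omega)).symm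
    rw [step1]
    apply ncdet_row_eq_zero M'' i0 i1
    · apply Fin.ne_of_val_ne; simp only [Fin.val_mk, i0, i1]; omega
    · intro j
      have h0 : i0 ≠ i1 := by apply Fin.ne_of_val_ne; simp only [Fin.val_mk, i0, i1]; omega
      simp only [hM'', if_neg h0, if_pos rfl]
    · intro i j i' j'
      simp only [hM'']
      split_ifs <;> exact hcE _ _ _ _
  rcases Nat.lt_or_ge k (ℓ - m) with hMid | hB
  · -- middle case : x commutes with every entry
    have hcx : Commute x (ncdet M) := by
      unfold ncdet
      apply Commute.sum_right
      intro σ _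
      apply Commute.smul_right
      apply Commute.list_prod_right
      intro y hy
      rw [List.mem_map] at hy
      obtain ⟨a, _, rfl⟩ := hy
      show x * M a (σ a) = M a (σ a) * x
      apply eb_bracket_zero
      · apply Fin.ne_of_val_ne; simp only [Fin.val_mk]
        have := a.isLt; omega
      · apply Fin.ne_of_val_ne; simp only [Fin.val_mk]
        have := (σ a).isLt; omega
    rw [sub_eq_zero]
    exact hcx.eq
  · -- Case B : ℓ - m ≤ k, bracket replaces column ℓ-1-k by column ℓ-2-k
    have hj0 : ℓ - 1 - k < m := by omega
    have hj1 : ℓ - 2 - k < m := by omega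
    set j0 : Fin m := ⟨ℓ - 1 - k, hj0⟩ with hj0d
    set j1 : Fin m := ⟨ℓ - 2 - k, hj1⟩ with hj1d
    set N : Fin m → Fin m → UniversalEnvelopingAlgebra ℂ (sl (Fin ℓ) ℂ) := fun i j => M i (if j = j0 then j1 else j) with hN
    have step1 : x * ncdet M - ncdet M * x = -(ncdet N) := by
      rw [comm_ncdet_sum]
      unfold ncdet
      rw [← Finset.sum_neg_distrib]
      apply Finset.sum_congr rfl
      intro σ _
      rw [← smul_neg]
      congr 1
      have hbr : x * ((List.finRange m).map (fun i => M i (σ i))).prod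
          - ((List.finRange m).map (fun i => M i (σ i))).prod * x
          = ((List.finRange m).map (fun i =>
              if i = σ⁻¹ j0 then -(M i j1) else M i (σ i))).prod := by
        apply comm_prod_single (List.finRange m) (List.nodup_finRange m) _ _ x (σ⁻¹ j0)
          (List.mem_finRange _)
        · intro a _ ha
          have hσa : σ a ≠ j0 := by
            intro hcon
            exact ha (by rw [← hcon]; exact (σ.symm_apply_apply a : σ⁻¹ (σ a) = a).symm)
          apply eb_bracket_zero
          · apply Fin.ne_of_val_ne; simp only [Fin.val_mk]
            have := a.isLt; omega
          · apply Fin.ne_of_val_ne; simp only [Fin.val_mk]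
            have hv : (σ a : ℕ) ≠ ℓ - 1 - k := fun h => hσa (Fin.ext h)
            have := (σ a).isLt; omega
        · intro a _ ha
          simp only [if_neg ha]
        · rw [if_pos rfl]
          have hσ : σ (σ⁻¹ j0) = j0 := (σ.apply_symm_apply j0 : σ (σ⁻¹ j0) = j0)
          rw [hσ]
          set a0 : Fin m := σ⁻¹ j0 with ha0
          have e1 : M a0 j0 = ι ℂ (single (⟨(a0 : ℕ), by omega⟩ : Fin ℓ) (⟨k, by omega⟩ : Fin ℓ) (by apply Fin.ne_of_val_ne; simp only [Fin.val_mk]; have := a0.isLt; omega) (1 : ℂ)) := by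
            apply congrArg (ι ℂ)
            apply eb_congr _ rfl
            apply Fin.ext; simp only [Fin.val_mk, hj0d]; omega
          have e2 : M a0 j1 = ι ℂ (single (⟨(a0 : ℕ), by omega⟩ : Fin ℓ) (⟨k + 1, hk⟩ : Fin ℓ) (by apply Fin.ne_of_val_ne; simp only [Fin.val_mk]; have := a0.isLt; omega) (1 : ℂ)) := by
            apply congrArg (ι ℂ)
            apply eb_congr _ rfl
            apply Fin.ext; simp only [Fin.val_mk, hj1d]; omega
          rw [e1, e2]
          have := eb_bracket_mid (n := Fin ℓ)
            (a := ⟨(a0 : ℕ), by omega⟩) (b := ⟨k, by omega⟩) (d := ⟨k + 1, hk⟩)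
            (by apply Fin.ne_of_val_ne; simp only [Fin.val_mk]; have := a0.isLt; omega)
            (by apply Fin.ne_of_val_ne; simp only [Fin.val_mk]; omega)
            (by apply Fin.ne_of_val_ne; simp only [Fin.val_mk]; have := a0.isLt; omega)
          rw [← this, neg_sub]
      rw [hbr]
      apply prod_replace_neg (List.finRange m) (List.nodup_finRange m) _ _ (σ⁻¹ j0)
        (List.mem_finRange _)
      · intro a _ ha
        have hσa : σ a ≠ j0 := by
          intro hcon
          exact ha (by rw [← hcon]; exact (σ.symm_apply_apply a : σ⁻¹ (σ a) = a).symm)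
        simp only [hN, if_neg ha, if_neg hσa]
      · rw [if_pos rfl]
        have hσ : σ (σ⁻¹ j0) = j0 := (σ.apply_symm_apply j0 : σ (σ⁻¹ j0) = j0)
        simp [hN, hσ]
    rw [step1, neg_eq_zero]
    apply ncdet_col_eq_zero N j0 j1
    · apply Fin.ne_of_val_ne; simp only [Fin.val_mk, j0, j1]; omega
    · intro i
      have h10 : j1 ≠ j0 := by apply Fin.ne_of_val_ne; simp only [Fin.val_mk, j0, j1]; omega
      simp [hN, h10]

end Main

/-- In `U(sl_ℓ(ℂ))`, with `Δ_m = det ((E_{i, ℓ+1-j})_{1 ≤ i,j ≤ m})` (where `2m ≤ ℓ`,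
`ℓ ≥ 4`, so the entries pairwise commute), the adjoint action of every standard raising
generator `E_{k,k+1}` annihilates `Δ_m`. -/
theorem stmt_10 {ℓ m : ℕ} (hℓ : 4 ≤ ℓ) (hm : 2 * m ≤ ℓ)
    (Δ : UniversalEnvelopingAlgebra ℂ (sl (Fin ℓ) ℂ))
    (hΔ : Δ = ncdet (fun i j : Fin m =>
      ι ℂ (single (⟨i, by omega⟩ : Fin ℓ) (⟨ℓ - 1 - j, by omega⟩ : Fin ℓ)
        (by apply Fin.ne_of_val_ne; simp only [Fin.val_mk]; have := i.isLt; have := j.isLt; omega) (1 : ℂ)))) :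
    ∀ (k : Fin ℓ) (hk : (k : ℕ) + 1 < ℓ),
      ι ℂ (single k (⟨(k : ℕ) + 1, hk⟩ : Fin ℓ) (by apply Fin.ne_of_val_ne; simp only [Fin.val_mk]; omega) (1 : ℂ)) * Δ -
        Δ * ι ℂ (single k (⟨(k : ℕ) + 1, hk⟩ : Fin ℓ) (by apply Fin.ne_of_val_ne; simp only [Fin.val_mk]; omega) (1 : ℂ)) = 0 := by
  intro k hk
  rw [hΔ]
  exact main_aux hℓ hm (k : ℕ) hk (by apply Fin.ne_of_val_ne; simp only [Fin.val_mk]; omega)
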